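/- arXiv:1102.1830 — 5 statements merged into one kernel-verified Lean document; each statement's English description precedes it below -/
import Mathlib

section
/- For every t, s ∈ ℝ with t ≠ s or t = s, and d ∈ (0, 1/2), one has ∫_{-∞}^{min(t,s)} (t-u)^{d-1} (s-u)^{d-1} du = (Γ(d) Γ(1-2d) / Γ(1-d)) · |t-s|^{2d-1}. -/
open MeasureTheory Real Set

lemma betaReal (a b : ℝ) (ha : 0 < a) (hb : 0 < b) :
    ∫ x in (0:ℝ)..1, x ^ (a - 1) * (1 - x) ^ (b - 1)
      = Real.Gamma a * Real.Gamma b / Real.Gamma (a + b) := by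
  have hab : 0 < a + b := by linarith
  have hG : Real.Gamma (a + b) ≠ 0 := (Real.Gamma_pos_of_pos hab).ne'
  have key : Complex.Gamma a * Complex.Gamma b
      = Complex.Gamma (a + b) * Complex.betaIntegral a b := by
    have := Complex.Gamma_mul_Gamma_eq_betaIntegral (s := (a:ℂ)) (t := (b:ℂ))
      (by simpa using ha) (by simpa using hb)
    simpa using this
  have hbeta : Complex.betaIntegral a b
      = ((∫ x in (0:ℝ)..1, x ^ (a - 1) * (1 - x) ^ (b - 1) : ℝ) : ℂ) := by
    rw [Complex.betaIntegral, ← intervalIntegral.integral_ofReal]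
    refine intervalIntegral.integral_congr_ae (MeasureTheory.ae_of_all _ fun x hx => ?_)
    rw [Set.uIoc_of_le (by norm_num : (0:ℝ) ≤ 1)] at hx
    rw [show ((a:ℂ) - 1) = ((a - 1 : ℝ) : ℂ) by push_cast; ring,
      show ((b:ℂ) - 1) = ((b - 1 : ℝ) : ℂ) by push_cast; ring,
      show (1 - (x:ℂ)) = ((1 - x : ℝ) : ℂ) by push_cast; ring,
      ← Complex.ofReal_cpow hx.1.le, ← Complex.ofReal_cpow (by linarith [hx.2] : (0:ℝ) ≤ 1 - x),
      ← Complex.ofReal_mul]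
  rw [hbeta] at key
  rw [show ((a:ℂ) + b) = ((a + b : ℝ) : ℂ) by push_cast; ring,
    Complex.Gamma_ofReal, Complex.Gamma_ofReal, Complex.Gamma_ofReal,
    ← Complex.ofReal_mul, ← Complex.ofReal_mul] at key
  have := Complex.ofReal_injective key
  field_simp
  linarith [this]

lemma helper (d t s : ℝ) (hd : 0 < d) (hd' : d < 1/2) (h : s < t) :
    ∫ u in Set.Iio s, (t - u) ^ (d - 1) * (s - u) ^ (d - 1)
      = Real.Gamma d * Real.Gamma (1 - 2 * d) / Real.Gamma (1 - d)
        * (t - s) ^ (2 * d - 1) := by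
  set c : ℝ := t - s with hcdef
  have hc : 0 < c := by simp [hcdef]; linarith
  set f : ℝ → ℝ := fun x => s - c * (x / (1 - x)) with hf
  have himg : f '' Set.Ioo (0:ℝ) 1 = Set.Iio s := by
    ext u
    constructor
    · rintro ⟨x, hx, rfl⟩
      have hx0 : 0 < x := hx.1
      have h1x : 0 < 1 - x := by linarith [hx.2]
      have : 0 < c * (x / (1 - x)) := by positivity
      simp [hf]; linarith
    · intro hu
      simp only [Set.mem_Iio] at hu
      set v : ℝ := (s - u) / c with hv
      have hv0 : 0 < v := div_pos (by linarith) hc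
      refine ⟨v / (1 + v), ⟨by positivity, ?_⟩, ?_⟩
      · rw [div_lt_one (by positivity)]; linarith
      · have h1v : (0:ℝ) < 1 + v := by positivity
        simp only [hf]
        have e : 1 - v / (1 + v) = 1 / (1 + v) := by field_simp; ring
        rw [e]
        have e2 : v / (1 + v) / (1 / (1 + v)) = v := by field_simp
        rw [e2, hv, mul_div_cancel₀ _ hc.ne']
        ring
  have hderiv : ∀ x ∈ Set.Ioo (0:ℝ) 1,
      HasDerivWithinAt f (-(c / (1 - x)^2)) (Set.Ioo (0:ℝ) 1) x := by
    intro x hx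
    have h1x : 0 < 1 - x := by linarith [hx.2]
    have hq : HasDerivAt (fun y : ℝ => y / (1 - y))
        ((1 * (1 - x) - x * (0 - 1)) / ((1 - x)^2)) x :=
      (hasDerivAt_id x).div ((hasDerivAt_const x (1:ℝ)).sub (hasDerivAt_id x)) h1x.ne'
    have := (hq.const_mul c).const_sub s
    rw [show -(c / (1 - x)^2) = -(c * ((1 * (1 - x) - x * (0 - 1)) / (1 - x) ^ 2)) by ring]
    exact this.hasDerivWithinAt
  have hinj : Set.InjOn f (Set.Ioo (0:ℝ) 1) := by
    intro a ha b hb hab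
    have h1a : 0 < 1 - a := by linarith [ha.2]
    have h1b : 0 < 1 - b := by linarith [hb.2]
    simp only [hf, sub_right_inj] at hab
    have h2 : a / (1 - a) = b / (1 - b) := mul_left_cancel₀ hc.ne' hab
    rw [div_eq_div_iff h1a.ne' h1b.ne'] at h2
    nlinarith
  rw [← himg, integral_image_eq_integral_abs_deriv_smul measurableSet_Ioo hderiv hinj]
  have hcongr : ∀ x ∈ Set.Ioo (0:ℝ) 1,
      |(-(c / (1 - x)^2))| • ((t - f x) ^ (d - 1) * (s - f x) ^ (d - 1))
        = c ^ (2 * d - 1) * (x ^ (d - 1) * (1 - x) ^ (1 - 2 * d - 1)) := by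
    intro x hx
    have hx0 : 0 < x := hx.1
    have h1x : 0 < 1 - x := by linarith [hx.2]
    have e1 : t - f x = c / (1 - x) := by
      simp only [hf]
      field_simp
      ring
    have e2 : s - f x = c * x / (1 - x) := by
      simp only [hf]; ring
    rw [e1, e2, abs_neg, abs_of_pos (by positivity), smul_eq_mul,
      Real.div_rpow hc.le h1x.le, Real.div_rpow (by positivity) h1x.le,
      Real.mul_rpow hc.le hx0.le]
    have ec : c ^ (2*d-1) = c ^ ((1:ℝ) + (d-1) + (d-1)) := by congr 1; ring
    have ex : (1-x) ^ (1-2*d-1) = (1-x) ^ (-((2:ℕ):ℝ) + -(d-1) + -(d-1)) := by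
      congr 1; push_cast; ring
    rw [ec, Real.rpow_add hc, Real.rpow_add hc, Real.rpow_one,
      ex, Real.rpow_add h1x, Real.rpow_add h1x, Real.rpow_neg h1x.le,
      Real.rpow_neg h1x.le, Real.rpow_natCast]
    have n1 : (1 - x) ^ (d - 1) ≠ 0 := (Real.rpow_pos_of_pos h1x _).ne'
    have n2 : (1 - x) ^ (2:ℕ) ≠ 0 := by positivity
    field_simp
  rw [setIntegral_congr_fun measurableSet_Ioo hcongr, integral_const_mul,
    ← integral_Ioc_eq_integral_Ioo,
    ← intervalIntegral.integral_of_le (by norm_num : (0:ℝ) ≤ 1),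
    betaReal d (1 - 2*d) hd (by linarith),
    show d + (1 - 2*d) = 1 - d by ring]
  ring

theorem stmt_0 (d t s : ℝ) (hd : 0 < d) (hd' : d < 1/2) (hts : t ≠ s) :
    ∫ u in Set.Iio (min t s), (t - u) ^ (d - 1) * (s - u) ^ (d - 1)
      = Real.Gamma d * Real.Gamma (1 - 2 * d) / Real.Gamma (1 - d)
        * |t - s| ^ (2 * d - 1) := by
  rcases lt_or_gt_of_ne hts with h | h
  · -- t < s
    rw [min_eq_left h.le, abs_of_neg (by linarith : t - s < 0), neg_sub]
    rw [show (∫ u in Set.Iio t, (t - u) ^ (d - 1) * (s - u) ^ (d - 1))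
        = ∫ u in Set.Iio t, (s - u) ^ (d - 1) * (t - u) ^ (d - 1) by
      congr 1; ext u; ring]
    exact helper d s t hd hd' h
  · -- s < t
    rw [min_eq_right h.le, abs_of_pos (by linarith : (0:ℝ) < t - s)]
    exact helper d t s hd hd' h
end

section
/- Let d ∈ (0,1/2), α > d + 1/2, M > 0 and T < −e. Suppose ℓ : ℝ → ℝ satisfies |ℓ(s)| ≤ M (2|s| log log |s|)^{1/2} for all s < T. Then lim_{t → −∞} (1/|t|^α) ∫_{−∞}^t [(−s)^{d−1} − (t−s)^{d−1}] |ℓ(s)| ds = 0. -/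
open MeasureTheory Real Set Filter
open intervalIntegral in
private lemma my_integral_rpow {r a b : ℝ} (h : -1 < r) :
    ∫ x in a..b, x ^ r = (b ^ (r + 1) - a ^ (r + 1)) / (r + 1) :=
  integral_rpow (Or.inl h)

open intervalIntegral in
private lemma my_intervalIntegrable_rpow {r a b : ℝ} (h : -1 < r) :
    IntervalIntegrable (fun x => x ^ r) volume a b :=
  intervalIntegrable_rpow' h

open intervalIntegral in
private lemma my_integral_of_le {f : ℝ → ℝ} {a b : ℝ} (h : a ≤ b) :
    ∫ x in a..b, f x = ∫ x in Set.Ioc a b, f x :=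
  integral_of_le h

private lemma rpow_diff_le {d : ℝ} (hd0 : 0 ≤ d) (hd1 : d < 1) {x y : ℝ} (hx : 0 < x) (hxy : x ≤ y) :
    x ^ (d - 1) - y ^ (d - 1) ≤ (y - x) * x ^ (d - 2) := by
  have hy : 0 < y := lt_of_lt_of_le hx hxy
  have hz0 : 0 < x / y := div_pos hx hy
  have hz1 : x / y ≤ 1 := (div_le_one hy).2 hxy
  have key : x / y ≤ (x / y) ^ (1 - d) := by
    have := Real.rpow_le_rpow_of_exponent_ge hz0 hz1 (by linarith : 1 - d ≤ 1)
    rwa [Real.rpow_one] at this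
  have hid : x ^ (d - 1) * (x / y) ^ (1 - d) = y ^ (d - 1) := by
    rw [Real.div_rpow hx.le hy.le, ← mul_div_assoc, ← Real.rpow_add hx,
      show d - 1 + (1 - d) = 0 by ring, Real.rpow_zero,
      show (d - 1 : ℝ) = -(1 - d) by ring, Real.rpow_neg hy.le, one_div]
  have hp : 0 ≤ x ^ (d - 1) := Real.rpow_nonneg hx.le _
  have h1 : x ^ (d - 1) - y ^ (d - 1) ≤ x ^ (d - 1) * (1 - x / y) := by
    rw [← hid]; nlinarith
  have h2 : x ^ (d - 1) * (1 - x / y) ≤ x ^ (d - 1) * ((y - x) / x) := by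
    apply mul_le_mul_of_nonneg_left _ hp
    rw [one_sub_div hy.ne', div_le_div_iff₀ hy hx]
    nlinarith
  have hxx : x ^ (d - 2) = x ^ (d - 1) / x := by
    rw [show (d - 2 : ℝ) = d - 1 - 1 by ring, Real.rpow_sub_one hx.ne']
  have h3 : x ^ (d - 1) * ((y - x) / x) = (y - x) * x ^ (d - 2) := by
    rw [hxx]; ring
  linarith

private lemma env_bound {M ε s : ℝ} (hM : 0 < M) (hε : 0 < ε) (hs : Real.exp 1 < -s) :
    M * Real.sqrt (2 * |s| * Real.log (Real.log |s|)) ≤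
      M / Real.sqrt ε * |s| ^ (1 / 2 + ε) := by
  have he1 : (1 : ℝ) < Real.exp 1 := by
    have := Real.add_one_le_exp (1 : ℝ); linarith
  have hs0 : s < 0 := by nlinarith
  have ha : Real.exp 1 < |s| := by rw [abs_of_neg hs0]; exact hs
  have ha1 : (1 : ℝ) < |s| := lt_trans he1 ha
  have ha0 : (0 : ℝ) < |s| := lt_trans one_pos ha1
  have hlog1 : 1 ≤ Real.log |s| := by
    have := Real.log_le_log (Real.exp_pos 1) ha.le
    rwa [Real.log_exp] at this
  have h1 : Real.log (Real.log |s|) ≤ Real.log |s| :=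
    Real.log_le_self (by linarith)
  have h2 : Real.log |s| ≤ |s| ^ (2 * ε) / (2 * ε) :=
    Real.log_le_rpow_div (abs_nonneg s) (by positivity)
  have h4 : 2 * |s| * (|s| ^ (2 * ε) / (2 * ε)) = |s| ^ (1 + 2 * ε) / ε := by
    rw [Real.rpow_add ha0, Real.rpow_one]; field_simp
  have h3 : 2 * |s| * Real.log (Real.log |s|) ≤ |s| ^ (1 + 2 * ε) / ε := by
    rw [← h4]
    exact mul_le_mul_of_nonneg_left (h1.trans h2) (by positivity)
  have h5 : Real.sqrt (2 * |s| * Real.log (Real.log |s|)) ≤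
      |s| ^ (1 / 2 + ε) / Real.sqrt ε := by
    refine (Real.sqrt_le_sqrt h3).trans ?_
    rw [Real.sqrt_div (by positivity) ε, Real.sqrt_eq_rpow,
      ← Real.rpow_mul (abs_nonneg s), show (1 + 2 * ε) * (1 / 2) = 1 / 2 + ε by ring]
  calc M * Real.sqrt (2 * |s| * Real.log (Real.log |s|))
      ≤ M * (|s| ^ (1 / 2 + ε) / Real.sqrt ε) := mul_le_mul_of_nonneg_left h5 hM.le
    _ = M / Real.sqrt ε * |s| ^ (1 / 2 + ε) := by ring

set_option maxHeartbeats 1000000 in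
theorem stmt_3 (d α M T : ℝ) (hd : 0 < d) (hd' : d < 1/2)
    (hα : d + 1/2 < α) (hM : 0 < M) (hT : T < -Real.exp 1)
    (ℓ : ℝ → ℝ) (hmeas : Measurable ℓ)
    (henv : ∀ s < T, |ℓ s| ≤ M * Real.sqrt (2 * |s| * Real.log (Real.log |s|))) :
    Filter.Tendsto
      (fun t : ℝ =>
        (1 / |t| ^ α) * ∫ s in Set.Iic t, ((-s) ^ (d - 1) - (t - s) ^ (d - 1)) * |ℓ s|)
      Filter.atBot (nhds 0) := by
  have he1 : (1 : ℝ) < Real.exp 1 := by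
    have := Real.add_one_le_exp (1 : ℝ); linarith
  have hT0 : T < 0 := by linarith
  obtain ⟨ε, hε, hε1, hε2'⟩ : ∃ ε : ℝ, 0 < ε ∧ d + 1/2 + ε < α ∧ d - 3/2 + ε < -1 := by
    refine ⟨min ((α - (d + 1/2)) / 2) ((1/2 - d) / 2), lt_min (by linarith) (by linarith), ?_, ?_⟩
    · have := min_le_left ((α - (d + 1/2)) / 2) ((1/2 - d) / 2); linarith
    · have := min_le_right ((α - (d + 1/2)) / 2) ((1/2 - d) / 2); linarith
  obtain ⟨K, hK, henv'⟩ : ∃ K : ℝ, 0 < K ∧ ∀ s, s < T → |ℓ s| ≤ K * |s| ^ (1/2 + ε) :=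
    ⟨M / Real.sqrt ε, div_pos hM (Real.sqrt_pos.2 hε),
      fun s hs => (henv s hs).trans (env_bound hM hε (by linarith))⟩
  set p : ℝ := d - 3/2 + ε with hpdef
  have hε2 : p < -1 := hε2'
  obtain ⟨cB, hcB, hcBdef⟩ : ∃ cB : ℝ, 0 < cB ∧ cB = K * 2 ^ ((1:ℝ)/2 + ε) :=
    ⟨K * 2 ^ ((1:ℝ)/2 + ε), by positivity, rfl⟩
  have hp1 : -(p + 1) > 0 := by linarith [hε2', hpdef.le, hpdef.ge]
  obtain ⟨C, hC, hCdef⟩ : ∃ C : ℝ, 0 < C ∧ C = cB * (1 / (-(p + 1)) + 1 / d) := by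
    refine ⟨cB * (1 / (-(p + 1)) + 1 / d), ?_, rfl⟩
    have h1 : 0 < 1 / (-(p+1)) := by positivity
    have h2 : 0 < 1 / d := by positivity
    nlinarith
  -- key integral bound
  have key : ∀ t, t ≤ T →
      abs (∫ s in Set.Iic t, ((-s) ^ (d - 1) - (t - s) ^ (d - 1)) * |ℓ s|) ≤
        C * (-t) ^ (d + 1/2 + ε) := by
    intro t ht
    have hτe : Real.exp 1 < -t := by linarith
    have hτ0 : (0:ℝ) < -t := by linarith
    have ht0 : t < 0 := by linarith
    set f : ℝ → ℝ := fun s => ((-s) ^ (d - 1) - (t - s) ^ (d - 1)) * |ℓ s| with hfdef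
    have hfm : Measurable f := by
      exact ((measurable_neg.pow_const _).sub
        ((measurable_const.sub measurable_id).pow_const _)).mul hmeas.abs
    -- the substitution map
    have hMP : MeasurePreserving (fun s : ℝ => t - s) volume volume :=
      Measure.measurePreserving_sub_left volume t
    have hemb : MeasurableEmbedding (fun s : ℝ => t - s) :=
      (Homeomorph.subLeft t).isClosedEmbedding.measurableEmbedding
    have hpreB : (fun s : ℝ => t - s) ⁻¹' (Set.Ici (-t)) = Set.Iic (2 * t) := by
      ext u; simp only [Set.mem_preimage, Set.mem_Ici, Set.mem_Iic]
      constructor <;> intro h <;> linarith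
    have hpreA : (fun s : ℝ => t - s) ⁻¹' (Set.Ioo 0 (-t)) = Set.Ioo (2 * t) t := by
      ext u; simp only [Set.mem_preimage, Set.mem_Ioo]
      constructor <;> intro h <;> constructor <;> linarith
    -- integrability and values of model integrals
    have h0B : IntegrableOn (fun x : ℝ => x ^ p) (Set.Ici (-t)) volume := by
      rw [integrableOn_Ici_iff_integrableOn_Ioi]
      exact integrableOn_Ioi_rpow_of_lt hε2 hτ0
    have hIB : IntegrableOn (fun s : ℝ => (t - s) ^ p) (Set.Iic (2 * t)) volume := by
      have := (hMP.integrableOn_comp_preimage hemb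
        (f := fun x : ℝ => x ^ p) (s := Set.Ici (-t))).mpr h0B
      rwa [hpreB] at this
    have hvalB : ∫ s in Set.Iic (2 * t), (t - s) ^ p = (-t) ^ (p + 1) / (-(p + 1)) := by
      have h := hMP.setIntegral_preimage_emb hemb (fun x : ℝ => x ^ p) (Set.Ici (-t))
      rw [hpreB] at h
      rw [h, integral_Ici_eq_integral_Ioi, integral_Ioi_rpow_of_lt hε2 hτ0]
      rw [neg_div, ← div_neg]
    have h0A : IntegrableOn (fun x : ℝ => x ^ (d - 1)) (Set.Ioo 0 (-t)) volume := by
      have h := my_intervalIntegrable_rpow (a := 0) (b := -t)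
        (by linarith : (-1:ℝ) < d - 1)
      rw [intervalIntegrable_iff_integrableOn_Ioc_of_le hτ0.le] at h
      exact h.congr_set_ae Ioo_ae_eq_Ioc
    have hIA : IntegrableOn (fun s : ℝ => (t - s) ^ (d - 1)) (Set.Ioo (2 * t) t) volume := by
      have := (hMP.integrableOn_comp_preimage hemb
        (f := fun x : ℝ => x ^ (d - 1)) (s := Set.Ioo 0 (-t))).mpr h0A
      rwa [hpreA] at this
    have hvalA : ∫ s in Set.Ioo (2 * t) t, (t - s) ^ (d - 1) = (-t) ^ d / d := by
      have h := hMP.setIntegral_preimage_emb hemb (fun x : ℝ => x ^ (d - 1)) (Set.Ioo 0 (-t))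
      rw [hpreA] at h
      rw [h, setIntegral_congr_set Ioo_ae_eq_Ioc,
        ← my_integral_of_le hτ0.le,
        my_integral_rpow (by linarith : (-1:ℝ) < d - 1)]
      rw [show d - 1 + 1 = d by ring, Real.zero_rpow hd.ne']
      ring
    -- pointwise bounds
    have hboundB : ∀ s ∈ Set.Iic (2 * t), |f s| ≤ cB * (-t) * (t - s) ^ p := by
      intro s hs
      simp only [Set.mem_Iic] at hs
      have hx0 : 0 < t - s := by linarith
      have hxτ : -t ≤ t - s := by linarith
      have hxy : t - s ≤ -s := by linarith
      have hy0 : 0 < -s := lt_of_lt_of_le hx0 hxy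
      have hsT : s < T := by linarith
      have hydec : (-s) ^ (d-1) ≤ (t - s) ^ (d-1) :=
        Real.rpow_le_rpow_of_nonpos hx0 hxy (by linarith)
      have habs : |f s| = ((t - s) ^ (d-1) - (-s) ^ (d-1)) * |ℓ s| := by
        rw [hfdef]; rw [abs_mul, abs_abs, abs_of_nonpos (by linarith), neg_sub]
      rw [habs]
      have h1 : (t - s) ^ (d-1) - (-s) ^ (d-1) ≤ (-t) * (t - s) ^ (d - 2) := by
        have := rpow_diff_le hd.le (by linarith : d < 1) hx0 hxy
        have heq : -s - (t - s) = -t := by ring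
        rw [heq] at this; exact this
      have h2 : |ℓ s| ≤ K * (2 ^ ((1:ℝ)/2 + ε) * (t - s) ^ ((1:ℝ)/2 + ε)) := by
        refine (henv' s hsT).trans ?_
        rw [abs_of_neg (by linarith : s < 0)]
        rw [← Real.mul_rpow (by norm_num) hx0.le]
        have : -s ≤ 2 * (t - s) := by linarith
        exact mul_le_mul_of_nonneg_left
          (Real.rpow_le_rpow hy0.le this (by positivity)) hK.le
      calc ((t - s) ^ (d-1) - (-s) ^ (d-1)) * |ℓ s|
          ≤ ((-t) * (t - s) ^ (d - 2)) * (K * (2 ^ ((1:ℝ)/2 + ε) * (t - s) ^ ((1:ℝ)/2 + ε))) := by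
            apply mul_le_mul h1 h2 (abs_nonneg _) (by positivity)
        _ = cB * (-t) * ((t - s) ^ (d - 2) * (t - s) ^ ((1:ℝ)/2 + ε)) := by
            rw [hcBdef]; ring
        _ = cB * (-t) * (t - s) ^ p := by
            rw [← Real.rpow_add hx0, hpdef,
              show d - 2 + ((1:ℝ)/2 + ε) = d - 3/2 + ε by ring]
    have hboundA : ∀ s ∈ Set.Ioo (2 * t) t, |f s| ≤ cB * (-t) ^ ((1:ℝ)/2 + ε) * (t - s) ^ (d - 1) := by
      intro s hs
      simp only [Set.mem_Ioo] at hs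
      have hx0 : 0 < t - s := by linarith [hs.2]
      have hxy : t - s ≤ -s := by linarith
      have hy0 : 0 < -s := lt_of_lt_of_le hx0 hxy
      have hsT : s < T := by linarith [hs.2]
      have habs : |f s| = ((t - s) ^ (d-1) - (-s) ^ (d-1)) * |ℓ s| := by
        have hydec : (-s) ^ (d-1) ≤ (t - s) ^ (d-1) :=
          Real.rpow_le_rpow_of_nonpos hx0 hxy (by linarith)
        rw [hfdef]; rw [abs_mul, abs_abs, abs_of_nonpos (by linarith), neg_sub]
      rw [habs]
      have h1 : (t - s) ^ (d-1) - (-s) ^ (d-1) ≤ (t - s) ^ (d-1) := by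
        have : (0:ℝ) ≤ (-s) ^ (d-1) := Real.rpow_nonneg hy0.le _
        linarith
      have h2 : |ℓ s| ≤ K * (2 ^ ((1:ℝ)/2 + ε) * (-t) ^ ((1:ℝ)/2 + ε)) := by
        refine (henv' s hsT).trans ?_
        rw [abs_of_neg (by linarith : s < 0)]
        rw [← Real.mul_rpow (by norm_num) hτ0.le]
        have : -s ≤ 2 * (-t) := by linarith [hs.1]
        exact mul_le_mul_of_nonneg_left
          (Real.rpow_le_rpow hy0.le this (by positivity)) hK.le
      calc ((t - s) ^ (d-1) - (-s) ^ (d-1)) * |ℓ s|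
          ≤ (t - s) ^ (d-1) * (K * (2 ^ ((1:ℝ)/2 + ε) * (-t) ^ ((1:ℝ)/2 + ε))) := by
            apply mul_le_mul h1 h2 (abs_nonneg _) (Real.rpow_nonneg hx0.le _)
        _ = cB * (-t) ^ ((1:ℝ)/2 + ε) * (t - s) ^ (d - 1) := by
            rw [hcBdef]; ring
    -- integrability of f on pieces
    have hfB : IntegrableOn f (Set.Iic (2 * t)) volume := by
      refine Integrable.mono' (hIB.const_mul (cB * (-t))) hfm.aestronglyMeasurable.restrict ?_
      refine (ae_restrict_iff' measurableSet_Iic).2 (ae_of_all _ fun s hs => ?_)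
      rw [Real.norm_eq_abs]
      simpa [mul_assoc] using hboundB s hs
    have hfA : IntegrableOn f (Set.Ioo (2 * t) t) volume := by
      refine Integrable.mono' (hIA.const_mul (cB * (-t) ^ ((1:ℝ)/2 + ε)))
        hfm.aestronglyMeasurable.restrict ?_
      refine (ae_restrict_iff' measurableSet_Ioo).2 (ae_of_all _ fun s hs => ?_)
      rw [Real.norm_eq_abs]
      simpa [mul_assoc] using hboundA s hs
    -- splitting
    have hdisj : Disjoint (Set.Iic (2 * t)) (Set.Ioo (2 * t) t) :=
      (Set.Iic_disjoint_Ioi le_rfl).mono_right Set.Ioo_subset_Ioi_self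
    have hsplit : ∫ s in Set.Iic t, f s =
        (∫ s in Set.Iic (2 * t), f s) + ∫ s in Set.Ioo (2 * t) t, f s := by
      rw [← setIntegral_congr_set Iio_ae_eq_Iic,
        ← Set.Iic_union_Ioo_eq_Iio (by linarith : 2 * t < t),
        setIntegral_union hdisj measurableSet_Ioo hfB hfA]
    -- bounds on each piece
    have hB : |∫ s in Set.Iic (2 * t), f s| ≤ cB * (-t) ^ (d + 1/2 + ε) / (-(p + 1)) := by
      have h1 : |∫ s in Set.Iic (2 * t), f s| ≤ ∫ s in Set.Iic (2 * t), |f s| := by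
        simpa [Real.norm_eq_abs] using
          norm_integral_le_integral_norm (μ := volume.restrict (Set.Iic (2*t))) f
      have h2 : ∫ s in Set.Iic (2 * t), |f s| ≤ ∫ s in Set.Iic (2 * t), cB * (-t) * (t - s) ^ p := by
        refine integral_mono_of_nonneg (ae_of_all _ fun s => abs_nonneg _)
          (hIB.const_mul (cB * (-t))) ?_
        refine (ae_restrict_iff' measurableSet_Iic).2 (ae_of_all _ fun s hs => ?_)
        simpa [mul_assoc] using hboundB s hs
      have h3 : ∫ s in Set.Iic (2 * t), cB * (-t) * (t - s) ^ p
          = cB * (-t) ^ (d + 1/2 + ε) / (-(p + 1)) := by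
        have hpow : (-t) * (-t) ^ (p + 1) = (-t) ^ (d + 1/2 + ε) := by
          nth_rewrite 1 [← Real.rpow_one (-t)]
          rw [← Real.rpow_add hτ0, hpdef,
            show (1:ℝ) + (d - 3/2 + ε + 1) = d + 1/2 + ε by ring]
        rw [integral_const_mul, hvalB, ← hpow]; ring
      calc |∫ s in Set.Iic (2 * t), f s| ≤ _ := h1
        _ ≤ _ := h2
        _ = _ := h3
    have hA : |∫ s in Set.Ioo (2 * t) t, f s| ≤ cB * (-t) ^ (d + 1/2 + ε) / d := by
      have h1 : |∫ s in Set.Ioo (2 * t) t, f s| ≤ ∫ s in Set.Ioo (2 * t) t, |f s| := by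
        simpa [Real.norm_eq_abs] using
          norm_integral_le_integral_norm (μ := volume.restrict (Set.Ioo (2*t) t)) f
      have h2 : ∫ s in Set.Ioo (2 * t) t, |f s| ≤
          ∫ s in Set.Ioo (2 * t) t, cB * (-t) ^ ((1:ℝ)/2 + ε) * (t - s) ^ (d - 1) := by
        refine integral_mono_of_nonneg (ae_of_all _ fun s => abs_nonneg _)
          (hIA.const_mul (cB * (-t) ^ ((1:ℝ)/2 + ε))) ?_
        refine (ae_restrict_iff' measurableSet_Ioo).2 (ae_of_all _ fun s hs => ?_)
        simpa [mul_assoc] using hboundA s hs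
      have h3 : ∫ s in Set.Ioo (2 * t) t, cB * (-t) ^ ((1:ℝ)/2 + ε) * (t - s) ^ (d - 1)
          = cB * (-t) ^ (d + 1/2 + ε) / d := by
        have hpow : (-t) ^ ((1:ℝ)/2 + ε) * (-t) ^ d = (-t) ^ (d + 1/2 + ε) := by
          rw [← Real.rpow_add hτ0, show (1:ℝ)/2 + ε + d = d + 1/2 + ε by ring]
        rw [integral_const_mul, hvalA, ← hpow]; ring
      calc |∫ s in Set.Ioo (2 * t) t, f s| ≤ _ := h1
        _ ≤ _ := h2
        _ = _ := h3
    calc |∫ s in Set.Iic t, f s|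
        ≤ |∫ s in Set.Iic (2 * t), f s| + |∫ s in Set.Ioo (2 * t) t, f s| := by
          rw [hsplit]; exact abs_add_le _ _
      _ ≤ cB * (-t) ^ (d + 1/2 + ε) / (-(p + 1)) + cB * (-t) ^ (d + 1/2 + ε) / d :=
          add_le_add hB hA
      _ = C * (-t) ^ (d + 1/2 + ε) := by rw [hCdef]; field_simp
  -- conclude
  have hg : Tendsto (fun t : ℝ => C * (-t) ^ (d + 1/2 + ε - α)) atBot (nhds 0) := by
    have h1 : Tendsto (fun x : ℝ => x ^ (d + 1/2 + ε - α)) atTop (nhds 0) := by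
      rw [show d + 1/2 + ε - α = -(α - (d + 1/2 + ε)) by ring]
      exact tendsto_rpow_neg_atTop (by linarith)
    have h2 := (h1.comp tendsto_neg_atBot_atTop).const_mul C
    rw [mul_zero] at h2
    exact h2
  refine squeeze_zero_norm' ?_ hg
  · filter_upwards [eventually_le_atBot T] with t ht
    have hτ0 : (0:ℝ) < -t := by linarith
    have habs : |t| = -t := abs_of_neg (by linarith)
    rw [Real.norm_eq_abs, abs_mul, habs,
      abs_of_nonneg (by positivity : (0:ℝ) ≤ 1 / (-t) ^ α)]
    calc 1 / (-t) ^ α * abs (∫ s in Set.Iic t, ((-s) ^ (d - 1) - (t - s) ^ (d - 1)) * |ℓ s|)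
        ≤ 1 / (-t) ^ α * (C * (-t) ^ (d + 1/2 + ε)) := by
          exact mul_le_mul_of_nonneg_left (key t ht) (by positivity)
      _ = C * (-t) ^ (d + 1/2 + ε - α) := by
          rw [Real.rpow_sub hτ0]; field_simp
end

section
/- Let λ > 0 and suppose x : ℝ → ℝ is a continuous solution of x(t) = x(s) − λ∫_s^t x(u) du + g(t) − g(s) for all s ≤ t, where g is continuous. Then for all s ≤ t: x(t) = e^{−λ(t−s)} x(s) + e^{−λt} ∫_s^t e^{λu} dg(u), where the last integral is the Riemann–Stieltjes integral defined by integration by parts: ∫_s^t e^{λu} dg(u) = e^{λt}g(t) − e^{λs}g(s) − λ∫_s^t g(u) e^{λu} du. -/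
open MeasureTheory Real Set Filter

theorem stmt_8 (lam : ℝ) (hlam : 0 < lam) (g : ℝ → ℝ) (hg : Continuous g)
    (x : ℝ → ℝ) (hx : Continuous x)
    (hxsol : ∀ s t : ℝ, s ≤ t →
      x t = x s - lam * (∫ u in Set.Icc s t, x u) + g t - g s) :
    ∀ s t : ℝ, s ≤ t →
      x t = Real.exp (-(lam * (t - s))) * x s +
        Real.exp (-(lam * t)) *
          (Real.exp (lam * t) * g t - Real.exp (lam * s) * g s
            - lam * ∫ u in Set.Icc s t, g u * Real.exp (lam * u)) := by
  intro s t hst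
  set z : ℝ → ℝ := fun u => x u - g u with hz
  -- interval integral version of the solution property
  have hIcc : ∀ a b : ℝ, a ≤ b → (∫ u in Set.Icc a b, x u) = ∫ u in a..b, x u := by
    intro a b hab
    rw [intervalIntegral.integral_of_le hab, MeasureTheory.integral_Icc_eq_integral_Ioc]
  have hsol' : ∀ a b : ℝ, z b - z a = -lam * ∫ u in a..b, x u := by
    intro a b
    rcases le_total a b with h | h
    · have := hxsol a b h
      simp only [hz]
      rw [← hIcc a b h]
      linarith
    · have := hxsol b a h
      simp only [hz]
      rw [intervalIntegral.integral_symm, ← hIcc b a h]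
      linarith
  -- z is differentiable with derivative -lam * x
  have hzd : ∀ u : ℝ, HasDerivAt z (-lam * x u) u := by
    intro u
    have h1 : HasDerivAt (fun v => ∫ w in (0:ℝ)..v, x w) (x u) u :=
      intervalIntegral.integral_hasDerivAt_right (hx.intervalIntegrable _ _)
        hx.stronglyMeasurable.stronglyMeasurableAtFilter hx.continuousAt
    have h2 : HasDerivAt (fun v => z 0 + -lam * ∫ w in (0:ℝ)..v, x w) (-lam * x u) u :=
      ((h1.const_mul (-lam)).const_add _)
    have heq : (fun v => z 0 + -lam * ∫ w in (0:ℝ)..v, x w) = z := by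
      funext v
      have := hsol' 0 v
      linarith
    rwa [heq] at h2
  -- the conserved quantity
  set w : ℝ → ℝ := fun u => Real.exp (lam * u) * z u
      + lam * ∫ v in (0:ℝ)..u, g v * Real.exp (lam * v) with hw
  have hwd : ∀ u : ℝ, HasDerivAt w 0 u := by
    intro u
    have he : HasDerivAt (fun v => Real.exp (lam * v)) (lam * Real.exp (lam * u)) u := by
      have := ((hasDerivAt_id u).const_mul lam).exp
      simpa [mul_comm] using this
    have hI : HasDerivAt (fun v => ∫ w in (0:ℝ)..v, g w * Real.exp (lam * w))
        (g u * Real.exp (lam * u)) u :=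
      intervalIntegral.integral_hasDerivAt_right
        ((hg.mul (Real.continuous_exp.comp (continuous_const.mul continuous_id))).intervalIntegrable _ _)
        (hg.mul (Real.continuous_exp.comp (continuous_const.mul continuous_id))).stronglyMeasurable.stronglyMeasurableAtFilter
        ((hg.mul (Real.continuous_exp.comp (continuous_const.mul continuous_id))).continuousAt)
    have := (he.mul (hzd u)).add (hI.const_mul lam)
    convert this using 1
    · rfl
    · rfl
    · rfl
    simp only [hz]
    ring
  have hwc : w t = w s := by
    have hdiff : Differentiable ℝ w := fun u => (hwd u).differentiableAt
    have hder : ∀ u, deriv w u = 0 := fun u => (hwd u).deriv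
    exact is_const_of_deriv_eq_zero hdiff hder t s
  -- unpack
  have key : Real.exp (lam * t) * z t - Real.exp (lam * s) * z s
      = -lam * ∫ u in s..t, g u * Real.exp (lam * u) := by
    have hsplit : (∫ v in (0:ℝ)..s, g v * Real.exp (lam * v))
        + (∫ v in s..t, g v * Real.exp (lam * v))
        = ∫ v in (0:ℝ)..t, g v * Real.exp (lam * v) :=
      intervalIntegral.integral_add_adjacent_intervals
        ((hg.mul (Real.continuous_exp.comp (continuous_const.mul continuous_id))).intervalIntegrable _ _)
        ((hg.mul (Real.continuous_exp.comp (continuous_const.mul continuous_id))).intervalIntegrable _ _)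
    simp only [hw] at hwc
    linear_combination hwc + lam * hsplit
  have hIccg : (∫ u in Set.Icc s t, g u * Real.exp (lam * u))
      = ∫ u in s..t, g u * Real.exp (lam * u) := by
    rw [intervalIntegral.integral_of_le hst, MeasureTheory.integral_Icc_eq_integral_Ioc]
  rw [hIccg]
  have hne : Real.exp (lam * t) ≠ 0 := (Real.exp_pos _).ne'
  have h1 : Real.exp (-(lam * (t - s))) = Real.exp (lam * s) / Real.exp (lam * t) := by
    rw [eq_div_iff hne, ← Real.exp_add]; ring_nf
  have h2 : Real.exp (-(lam * t)) = 1 / Real.exp (lam * t) := by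
    rw [Real.exp_neg]; simp
  rw [h1, h2]
  simp only [hz] at key
  field_simp
  linarith [key]
end

section
/- Let [a,b] ⊂ ℝ be compact, p ∈ (0,2), g : [a,b] → ℝ continuous with v_p(g,[a,b]) < ∞, and F ∈ C¹(ℝ) with F' Lipschitz continuous on compacts. Then the Riemann–Stieltjes integral ∫_a^b (F'∘g) dg exists and F(g(b)) − F(g(a)) = ∫_a^b (F'∘g)(s) dg(s). -/
open MeasureTheory Real Set

noncomputable section

/-- `x 0, …, x n` is a partition of `[a,b]`. -/
def IsPartition (a b : ℝ) (n : ℕ) (x : ℕ → ℝ) : Prop :=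
  x 0 = a ∧ x n = b ∧ ∀ i < n, x i < x (i + 1)

/-- `f` has bounded `p`-variation on `[a,b]`. -/
def pVarBdd (p : ℝ) (f : ℝ → ℝ) (a b : ℝ) : Prop :=
  ∃ C : ℝ, ∀ n : ℕ, ∀ x : ℕ → ℝ, IsPartition a b n x →
    ∑ i ∈ Finset.range n, |f (x (i + 1)) - f (x i)| ^ p ≤ C

/-- Riemann–Stieltjes sum of `f` against the integrator `h`. -/
def RSSum (f h : ℝ → ℝ) (n : ℕ) (x y : ℕ → ℝ) : ℝ :=
  ∑ i ∈ Finset.range n, f (y i) * (h (x (i + 1)) - h (x i))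

/-- The Riemann–Stieltjes integral of `f` with respect to `h` over `[a,b]`
exists and equals `I`: the Riemann–Stieltjes sums converge to `I` as the mesh
of the partition tends to `0`, uniformly over intermediate points. -/
def RSInteg (f h : ℝ → ℝ) (a b I : ℝ) : Prop :=
  ∀ ε > 0, ∃ δ > 0, ∀ n : ℕ, ∀ x y : ℕ → ℝ,
    IsPartition a b n x → (∀ i < n, x (i + 1) - x i < δ) →
    (∀ i < n, x i ≤ y i ∧ y i ≤ x (i + 1)) →
    |RSSum f h n x y - I| < ε

/-- pairing a sum over `range (2*n)`. -/
lemma aux_sum_pair (f : ℕ → ℝ) (n : ℕ) :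
    ∑ j ∈ Finset.range (2 * n), f j = ∑ i ∈ Finset.range n, (f (2 * i) + f (2 * i + 1)) := by
  induction n with
  | zero => simp
  | succ n ih =>
    have h : 2 * (n + 1) = (2 * n + 1) + 1 := by ring
    rw [h, Finset.sum_range_succ, Finset.sum_range_succ, ih, Finset.sum_range_succ]
    ring

/-- Monotonicity of a partition. -/
lemma aux_part_mono {a b : ℝ} {n : ℕ} {x : ℕ → ℝ} (h : IsPartition a b n x) :
    ∀ j ≤ n, ∀ i ≤ j, x i ≤ x j := by
  intro j
  induction j with
  | zero =>
    intro _ i hi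
    have : i = 0 := Nat.le_zero.mp hi
    subst this
    exact le_rfl
  | succ j ih =>
    intro hj i hi
    rcases Nat.lt_or_ge i (j + 1) with h' | h'
    · exact le_trans (ih (by omega) i (by omega)) (le_of_lt (h.2.2 j (by omega)))
    · have : i = j + 1 := by omega
      subst this; exact le_rfl

/-- p-variation bound extends to weakly monotone partitions. -/
lemma aux_weak_bound (g : ℝ → ℝ) (p C a b : ℝ) (hp : p ≠ 0)
    (hC : ∀ n : ℕ, ∀ x : ℕ → ℝ, IsPartition a b n x →
      ∑ i ∈ Finset.range n, |g (x (i + 1)) - g (x i)| ^ p ≤ C) :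
    ∀ m : ℕ, ∀ z : ℕ → ℝ, z 0 = a → z m = b → (∀ i < m, z i ≤ z (i + 1)) →
      ∑ j ∈ Finset.range m, |g (z (j + 1)) - g (z j)| ^ p ≤ C := by
  intro m
  induction m using Nat.strong_induction_on with
  | _ m ih =>
    intro z h0 hm hmono
    by_cases hs : ∀ i < m, z i < z (i + 1)
    · exact hC m z ⟨h0, hm, hs⟩
    · push_neg at hs
      obtain ⟨j, hjm, hj⟩ := hs
      have hze : z j = z (j + 1) := le_antisymm (hmono j hjm) hj
      set f : ℕ → ℝ := fun i => |g (z (i + 1)) - g (z i)| ^ p with hf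
      set z' : ℕ → ℝ := fun i => if i ≤ j then z i else z (i + 1) with hz'
      have hz'le : ∀ i ≤ j, z' i = z i := fun i hi => if_pos hi
      have hz'gt : ∀ i, j ≤ i → z' i = z (i + 1) := by
        intro i hi
        rcases eq_or_lt_of_le hi with h | h
        · rw [← h, hz'le j le_rfl, hze]
        · exact if_neg (by omega)
      have hjm1 : j ≤ m - 1 := by omega
      have h0' : z' 0 = a := by rw [hz'le 0 (Nat.zero_le j), h0]
      have hm' : z' (m - 1) = b := by
        rw [hz'gt (m - 1) hjm1]
        have : m - 1 + 1 = m := by omega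
        rw [this, hm]
      have hmono' : ∀ i < m - 1, z' i ≤ z' (i + 1) := by
        intro i hi
        rcases le_or_gt (i + 1) j with h | h
        · rw [hz'le i (by omega), hz'le (i + 1) h]
          exact hmono i (by omega)
        · rw [hz'gt i (by omega), hz'gt (i + 1) (by omega)]
          exact hmono (i + 1) (by omega)
      have hfj : f j = 0 := by
        simp only [hf, hze, sub_self, abs_zero]
        exact Real.zero_rpow hp
      -- sum identity
      have hsum : ∑ i ∈ Finset.range (m - 1), |g (z' (i + 1)) - g (z' i)| ^ p
          = ∑ i ∈ Finset.range m, f i := by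
        have e1 : ∀ i ∈ Finset.Ico 0 j, |g (z' (i + 1)) - g (z' i)| ^ p = f i := by
          intro i hi
          have hij : i < j := (Finset.mem_Ico.mp hi).2
          rw [hz'le i (by omega), hz'le (i + 1) (by omega)]
        have e2 : ∀ i ∈ Finset.Ico j (m - 1), |g (z' (i + 1)) - g (z' i)| ^ p = f (i + 1) := by
          intro i hi
          have hij : j ≤ i := (Finset.mem_Ico.mp hi).1
          rw [hz'gt i hij, hz'gt (i + 1) (by omega)]
        calc ∑ i ∈ Finset.range (m - 1), |g (z' (i + 1)) - g (z' i)| ^ p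
            = ∑ i ∈ Finset.Ico 0 j, |g (z' (i + 1)) - g (z' i)| ^ p
              + ∑ i ∈ Finset.Ico j (m - 1), |g (z' (i + 1)) - g (z' i)| ^ p := by
              rw [Finset.range_eq_Ico, ← Finset.sum_Ico_consecutive _ (Nat.zero_le j) hjm1]
          _ = ∑ i ∈ Finset.Ico 0 j, f i + ∑ i ∈ Finset.Ico j (m - 1), f (i + 1) := by
              rw [Finset.sum_congr rfl e1, Finset.sum_congr rfl e2]
          _ = ∑ i ∈ Finset.Ico 0 j, f i + ∑ i ∈ Finset.Ico (j + 1) m, f i := by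
              congr 1
              rw [Finset.sum_Ico_eq_sum_range, Finset.sum_Ico_eq_sum_range]
              have : m - 1 - j = m - (j + 1) := by omega
              rw [this]
              refine Finset.sum_congr rfl fun k _ => ?_
              congr 1
              omega
          _ = ∑ i ∈ Finset.Ico 0 j, f i + (f j + ∑ i ∈ Finset.Ico (j + 1) m, f i) := by
              rw [hfj]; ring
          _ = ∑ i ∈ Finset.Ico 0 j, f i + ∑ i ∈ Finset.Ico j m, f i := by
              rw [Finset.sum_eq_sum_Ico_succ_bot hjm]
          _ = ∑ i ∈ Finset.range m, f i := by
              rw [Finset.range_eq_Ico, ← Finset.sum_Ico_consecutive _ (Nat.zero_le j) (le_of_lt hjm)]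
      rw [← hsum]
      exact ih (m - 1) (by omega) z' h0' hm' hmono'

/-- quadratic bound -/
lemma aux_sq_bound {p : ℝ} (hp : 0 < p) (hp2 : p ≤ 2) {s η : ℝ} (hs : 0 ≤ s) (hsη : s ≤ η) :
    s * s ≤ η ^ (2 - p) * s ^ p := by
  rcases eq_or_lt_of_le hs with h | h
  · rw [← h, Real.zero_rpow hp.ne']
    simp
  · have h2 : s * s = s ^ (2 - p) * s ^ p := by
      rw [← Real.rpow_add h, show (2 : ℝ) - p + p = ((2 : ℕ) : ℝ) by push_cast; ring,
        Real.rpow_natCast]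
      ring
    rw [h2]
    apply mul_le_mul_of_nonneg_right _ (Real.rpow_nonneg hs p)
    exact Real.rpow_le_rpow hs hsη (by linarith)

/-- Taylor-type estimate with Lipschitz derivative. -/
lemma aux_taylor (F : ℝ → ℝ) (hF : ContDiff ℝ 1 F) (L : NNReal) (R : ℝ)
    (hL : LipschitzOnWith L (deriv F) (Set.Icc (-R) R)) {v w : ℝ}
    (hv : v ∈ Set.Icc (-R) R) (hw : w ∈ Set.Icc (-R) R) :
    |F w - F v - deriv F v * (w - v)| ≤ (L : ℝ) * |w - v| * |w - v| := by
  have hdiff : ∀ t ∈ uIcc v w, DifferentiableAt ℝ F t :=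
    fun t _ => (hF.differentiable one_ne_zero).differentiableAt
  have hcont : Continuous (deriv F) := hF.continuous_deriv le_rfl
  have hint : IntervalIntegrable (deriv F) volume v w := hcont.intervalIntegrable v w
  have h1 : ∫ t in v..w, deriv F t = F w - F v :=
    intervalIntegral.integral_deriv_eq_sub hdiff hint
  have h3 : ∫ t in v..w, (deriv F t - deriv F v) = F w - F v - deriv F v * (w - v) := by
    rw [intervalIntegral.integral_sub hint (intervalIntegrable_const), h1,
      intervalIntegral.integral_const, smul_eq_mul]
    ring
  rw [← h3]
  have hsub : uIcc v w ⊆ Set.Icc (-R) R :=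
    Set.uIcc_subset_Icc hv hw
  have key : ∀ t ∈ Set.uIoc v w, ‖deriv F t - deriv F v‖ ≤ (L : ℝ) * |w - v| := by
    intro t ht
    have htm : t ∈ Set.Icc (-R) R := hsub (uIoc_subset_uIcc ht)
    have hdist : |t - v| ≤ |w - v| := by
      rcases Set.mem_uIoc.mp ht with ⟨h1', h2'⟩ | ⟨h1', h2'⟩
      · rw [abs_of_pos (by linarith), abs_of_pos (by linarith)]; linarith
      · rw [abs_of_nonpos (by linarith), abs_of_neg (by linarith)]; linarith
    have := hL.dist_le_mul t htm v hv
    rw [Real.dist_eq, Real.dist_eq] at this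
    rw [Real.norm_eq_abs]
    calc |deriv F t - deriv F v| ≤ (L : ℝ) * |t - v| := this
      _ ≤ (L : ℝ) * |w - v| := mul_le_mul_of_nonneg_left hdist L.coe_nonneg
  have hb := intervalIntegral.norm_integral_le_of_norm_le_const key
  rwa [Real.norm_eq_abs] at hb

theorem stmt_11 (p a b : ℝ) (hp : 0 < p) (hp2 : p < 2) (hab : a ≤ b)
    (g F : ℝ → ℝ)
    (hg : ContinuousOn g (Set.Icc a b)) (hgv : pVarBdd p g a b)
    (hF : ContDiff ℝ 1 F)
    (hF4 : ∀ r s : ℝ, ∃ L : NNReal, LipschitzOnWith L (deriv F) (Set.Icc r s)) :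
    RSInteg (fun s => deriv F (g s)) g a b (F (g b) - F (g a)) := by
  classical
  obtain ⟨C₀, hC₀⟩ := hgv
  set C := max C₀ 0 with hCdef
  have hCnn : 0 ≤ C := le_max_right _ _
  have hCb : ∀ n : ℕ, ∀ x : ℕ → ℝ, IsPartition a b n x →
      ∑ i ∈ Finset.range n, |g (x (i + 1)) - g (x i)| ^ p ≤ C :=
    fun n x h => (hC₀ n x h).trans (le_max_left _ _)
  obtain ⟨R₀, hR₀⟩ := isCompact_Icc.exists_bound_of_continuousOn hg
  set R := max R₀ 0 with hRdef
  have hR : ∀ t ∈ Set.Icc a b, g t ∈ Set.Icc (-R) R := by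
    intro t ht
    have := (hR₀ t ht).trans (le_max_left R₀ 0)
    rw [Real.norm_eq_abs, abs_le] at this
    exact this
  obtain ⟨L, hL⟩ := hF4 (-R) R
  have hu : UniformContinuousOn g (Set.Icc a b) :=
    isCompact_Icc.uniformContinuousOn_of_continuous hg
  intro ε hε
  have hA : (0 : ℝ) < ((L : ℝ) + 1) * (C + 1) := by positivity
  set X := ε / (2 * (((L : ℝ) + 1) * (C + 1))) with hXdef
  have hXpos : 0 < X := by positivity
  have h2p : (0 : ℝ) < 2 - p := by linarith
  set η := X ^ (2 - p)⁻¹ with hηdef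
  have hηpos : 0 < η := Real.rpow_pos_of_pos hXpos _
  have hηX : η ^ (2 - p) = X := by
    rw [hηdef, ← Real.rpow_mul hXpos.le, inv_mul_cancel₀ h2p.ne', Real.rpow_one]
  obtain ⟨δ, hδpos, hδ⟩ := Metric.uniformContinuousOn_iff.mp hu η hηpos
  refine ⟨δ, hδpos, ?_⟩
  intro n x y hpart hmesh hy
  have hxmem : ∀ i ≤ n, x i ∈ Set.Icc a b := by
    intro i hi
    constructor
    · have := aux_part_mono hpart i hi 0 (Nat.zero_le i)
      rwa [hpart.1] at this
    · have := aux_part_mono hpart n le_rfl i hi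
      rwa [hpart.2.1] at this
  have hymem : ∀ i < n, y i ∈ Set.Icc a b := by
    intro i hi
    exact ⟨(hxmem i (le_of_lt hi)).1.trans (hy i hi).1,
      (hy i hi).2.trans (hxmem (i + 1) hi).2⟩
  -- increments are small
  have hsη : ∀ i < n, |g (y i) - g (x i)| ≤ η := by
    intro i hi
    have h1 : dist (y i) (x i) < δ := by
      rw [Real.dist_eq, abs_of_nonneg (by linarith [(hy i hi).1])]
      linarith [(hy i hi).2, hmesh i hi]
    have := hδ (y i) (hymem i hi) (x i) (hxmem i (le_of_lt hi)) h1
    rw [Real.dist_eq] at this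
    exact this.le
  have htη : ∀ i < n, |g (x (i + 1)) - g (y i)| ≤ η := by
    intro i hi
    have h1 : dist (x (i + 1)) (y i) < δ := by
      rw [Real.dist_eq, abs_of_nonneg (by linarith [(hy i hi).2])]
      linarith [(hy i hi).1, hmesh i hi]
    have := hδ (x (i + 1)) (hxmem (i + 1) hi) (y i) (hymem i hi) h1
    rw [Real.dist_eq] at this
    exact this.le
  -- per-term estimate
  have hterm : ∀ i < n,
      |deriv F (g (y i)) * (g (x (i + 1)) - g (x i)) - (F (g (x (i + 1))) - F (g (x i)))|
        ≤ (L : ℝ) * η ^ (2 - p)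
          * (|g (y i) - g (x i)| ^ p + |g (x (i + 1)) - g (y i)| ^ p) := by
    intro i hi
    have hvmem : g (y i) ∈ Set.Icc (-R) R := hR _ (hymem i hi)
    have humem : g (x i) ∈ Set.Icc (-R) R := hR _ (hxmem i (le_of_lt hi))
    have hwmem : g (x (i + 1)) ∈ Set.Icc (-R) R := hR _ (hxmem (i + 1) hi)
    have h1 := aux_taylor F hF L R hL hvmem humem
    have h2 := aux_taylor F hF L R hL hvmem hwmem
    have e : deriv F (g (y i)) * (g (x (i + 1)) - g (x i)) - (F (g (x (i + 1))) - F (g (x i)))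
        = (F (g (x i)) - F (g (y i)) - deriv F (g (y i)) * (g (x i) - g (y i)))
          - (F (g (x (i + 1))) - F (g (y i)) - deriv F (g (y i)) * (g (x (i + 1)) - g (y i))) := by
      ring
    rw [e]
    have habs1 : |g (x i) - g (y i)| = |g (y i) - g (x i)| := abs_sub_comm _ _
    have hb1 : (L : ℝ) * |g (x i) - g (y i)| * |g (x i) - g (y i)|
        ≤ (L : ℝ) * (η ^ (2 - p) * |g (y i) - g (x i)| ^ p) := by
      rw [habs1, mul_assoc]
      exact mul_le_mul_of_nonneg_left
        (aux_sq_bound hp hp2.le (abs_nonneg _) (hsη i hi)) L.coe_nonneg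
    have hb2 : (L : ℝ) * |g (x (i + 1)) - g (y i)| * |g (x (i + 1)) - g (y i)|
        ≤ (L : ℝ) * (η ^ (2 - p) * |g (x (i + 1)) - g (y i)| ^ p) := by
      rw [mul_assoc]
      exact mul_le_mul_of_nonneg_left
        (aux_sq_bound hp hp2.le (abs_nonneg _) (htη i hi)) L.coe_nonneg
    calc |(F (g (x i)) - F (g (y i)) - deriv F (g (y i)) * (g (x i) - g (y i)))
          - (F (g (x (i + 1))) - F (g (y i)) - deriv F (g (y i)) * (g (x (i + 1)) - g (y i)))|
        ≤ |F (g (x i)) - F (g (y i)) - deriv F (g (y i)) * (g (x i) - g (y i))|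
          + |F (g (x (i + 1))) - F (g (y i)) - deriv F (g (y i)) * (g (x (i + 1)) - g (y i))| :=
          abs_sub _ _
      _ ≤ (L : ℝ) * (η ^ (2 - p) * |g (y i) - g (x i)| ^ p)
          + (L : ℝ) * (η ^ (2 - p) * |g (x (i + 1)) - g (y i)| ^ p) := by
          exact add_le_add (h1.trans hb1) (h2.trans hb2)
      _ = (L : ℝ) * η ^ (2 - p)
          * (|g (y i) - g (x i)| ^ p + |g (x (i + 1)) - g (y i)| ^ p) := by ring
  -- sum of p-th powers over refined partition is ≤ C
  set z : ℕ → ℝ := fun j => if Even j then x (j / 2) else y (j / 2) with hzdef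
  have hz_even : ∀ i, z (2 * i) = x i := by
    intro i
    have : Even (2 * i) := even_two_mul i
    simp only [hzdef, if_pos this]
    congr 1
    omega
  have hz_odd : ∀ i, z (2 * i + 1) = y i := by
    intro i
    have : ¬ Even (2 * i + 1) := by rw [Nat.even_iff]; omega
    simp only [hzdef, if_neg this]
    congr 1
    omega
  have hz0 : z 0 = a := by
    have := hz_even 0
    simpa [hpart.1] using this
  have hz2n : z (2 * n) = b := by rw [hz_even n, hpart.2.1]
  have hzmono : ∀ j < 2 * n, z j ≤ z (j + 1) := by
    intro j hj
    rcases Nat.even_or_odd j with ⟨i, hi⟩ | ⟨i, hi⟩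
    · have hj2 : j = 2 * i := by omega
      subst hj2
      rw [hz_even i, hz_odd i]
      exact (hy i (by omega)).1
    · have hj2 : j = 2 * i + 1 := by omega
      subst hj2
      rw [hz_odd i, show 2 * i + 1 + 1 = 2 * (i + 1) by ring, hz_even (i + 1)]
      exact (hy i (by omega)).2
  have hSineq : ∑ i ∈ Finset.range n,
      (|g (y i) - g (x i)| ^ p + |g (x (i + 1)) - g (y i)| ^ p) ≤ C := by
    have hw := aux_weak_bound g p C a b hp.ne' hCb (2 * n) z hz0 hz2n hzmono
    rw [aux_sum_pair (fun j => |g (z (j + 1)) - g (z j)| ^ p) n] at hw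
    have : ∀ i ∈ Finset.range n,
        (fun j => |g (z (j + 1)) - g (z j)| ^ p) (2 * i)
          + (fun j => |g (z (j + 1)) - g (z j)| ^ p) (2 * i + 1)
        = |g (y i) - g (x i)| ^ p + |g (x (i + 1)) - g (y i)| ^ p := by
      intro i _
      simp only
      rw [hz_even i, hz_odd i, show 2 * i + 1 + 1 = 2 * (i + 1) by ring, hz_even (i + 1)]
    rwa [Finset.sum_congr rfl this] at hw
  -- telescoping
  have htel : ∑ i ∈ Finset.range n, (F (g (x (i + 1))) - F (g (x i))) = F (g b) - F (g a) := by
    rw [Finset.sum_range_sub (fun i => F (g (x i))) n, hpart.2.1, hpart.1]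
  -- assemble
  have hdiff : RSSum (fun s => deriv F (g s)) g n x y - (F (g b) - F (g a))
      = ∑ i ∈ Finset.range n,
        (deriv F (g (y i)) * (g (x (i + 1)) - g (x i)) - (F (g (x (i + 1))) - F (g (x i)))) := by
    rw [Finset.sum_sub_distrib, htel]
    rfl
  rw [hdiff]
  calc |∑ i ∈ Finset.range n,
        (deriv F (g (y i)) * (g (x (i + 1)) - g (x i)) - (F (g (x (i + 1))) - F (g (x i))))|
      ≤ ∑ i ∈ Finset.range n,
        |deriv F (g (y i)) * (g (x (i + 1)) - g (x i)) - (F (g (x (i + 1))) - F (g (x i)))| :=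
        Finset.abs_sum_le_sum_abs _ _
    _ ≤ ∑ i ∈ Finset.range n, (L : ℝ) * η ^ (2 - p)
        * (|g (y i) - g (x i)| ^ p + |g (x (i + 1)) - g (y i)| ^ p) :=
        Finset.sum_le_sum (fun i hi => hterm i (Finset.mem_range.mp hi))
    _ = (L : ℝ) * η ^ (2 - p) * ∑ i ∈ Finset.range n,
        (|g (y i) - g (x i)| ^ p + |g (x (i + 1)) - g (y i)| ^ p) := by
        rw [Finset.mul_sum]
    _ ≤ ((L : ℝ) + 1) * η ^ (2 - p) * (C + 1) := by
        have hη2 : 0 ≤ η ^ (2 - p) := Real.rpow_nonneg hηpos.le _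
        have hSnn : 0 ≤ ∑ i ∈ Finset.range n,
            (|g (y i) - g (x i)| ^ p + |g (x (i + 1)) - g (y i)| ^ p) :=
          Finset.sum_nonneg fun i _ =>
            add_nonneg (Real.rpow_nonneg (abs_nonneg _) _) (Real.rpow_nonneg (abs_nonneg _) _)
        have hLnn : (0 : ℝ) ≤ L := L.coe_nonneg
        nlinarith [hSineq, mul_le_mul_of_nonneg_left hSineq (mul_nonneg hLnn hη2)]
    _ = ε / 2 := by
        rw [hηX, hXdef]
        field_simp
    _ < ε := by linarith

end
end

section
/- Let σ₀ > 0 and γ ∈ [1/2, 1), and define on I = ℝ the functions σ(x) := σ₀|x|^γ and μ(x) := α|x|^γ + βx with α ∈ ℝ, β < 0. Set ψ(x) := μ(x)/σ(x) for x ≠ 0 extended appropriately. Then the function f(x) := sign((1−γ)σ₀ x − α/β) · |(1−γ)σ₀ x − α/β|^{1/(1−γ)} is a C¹ bijection from ℝ to ℝ, is strictly increasing, and satisfies f'(x) = σ(f(x)) for all x ∈ ℝ, and −λ f^{-1}(y) = μ(y)/σ(y) for all y ≠ 0 with λ := (1−γ)|β|. -/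
open Real Set

private lemma sign_mul_abs' (t : ℝ) : Real.sign t * |t| = t := by
  rcases lt_trichotomy t 0 with h | h | h
  · rw [Real.sign_of_neg h, abs_of_neg h]; ring
  · simp [h]
  · rw [Real.sign_of_pos h, abs_of_pos h]; ring

private lemma sign_pow_eq (p : ℝ) (hp : 1 < p) (t : ℝ) :
    Real.sign t * |t| ^ p = t * |t| ^ (p - 1) := by
  rcases eq_or_ne t 0 with rfl | ht
  · simp [Real.sign_zero, Real.zero_rpow (by positivity : p ≠ 0)]
  · have habs : (0:ℝ) < |t| := abs_pos.mpr ht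
    have h1 : |t| ^ p = |t| ^ (p - 1) * |t| := by
      rw [← Real.rpow_add_one habs.ne']
      norm_num
    rw [h1, show Real.sign t * (|t| ^ (p-1) * |t|)
        = (Real.sign t * |t|) * |t| ^ (p-1) by ring, sign_mul_abs']

private lemma hasDerivAt_mul_abs_rpow {q : ℝ} (hq : 0 < q) (t : ℝ) :
    HasDerivAt (fun t : ℝ => t * |t| ^ q) ((q + 1) * |t| ^ q) t := by
  rcases lt_trichotomy t 0 with h | h | h
  · have h1 : HasDerivAt (fun x : ℝ => -((-x) ^ (q + 1)))
        ((q + 1) * (-t) ^ q) t := by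
      have h2 : HasDerivAt (fun x : ℝ => x ^ (q + 1))
          ((q + 1) * (-t) ^ (q + 1 - 1)) (-t) :=
        Real.hasDerivAt_rpow_const (Or.inl (by linarith))
      have h3 := (h2.comp t (hasDerivAt_neg t)).neg
      simp only [add_sub_cancel_right] at h3
      exact h3.congr_deriv (by ring)
    have heq : (fun x : ℝ => x * |x| ^ q) =ᶠ[nhds t] fun x => -((-x) ^ (q + 1)) := by
      filter_upwards [eventually_lt_nhds h] with x hx
      rw [abs_of_neg hx, Real.rpow_add_one (by linarith : -x ≠ 0)]
      ring_nf
    have h4 := h1.congr_of_eventuallyEq heq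
    rwa [abs_of_neg h]
  · subst h
    rw [hasDerivAt_iff_tendsto_slope]
    have h0 : (q + 1) * |(0:ℝ)| ^ q = 0 := by
      simp [Real.zero_rpow hq.ne']
    rw [h0]
    have hca : ContinuousAt (fun x : ℝ => |x| ^ q) 0 := by
      have habs : ContinuousAt (fun x : ℝ => |x|) 0 := continuous_abs.continuousAt
      exact (Real.continuousAt_rpow_const (|(0:ℝ)|) q (Or.inr hq.le)).comp habs
    have hcont : Filter.Tendsto (fun x : ℝ => |x| ^ q) (nhds 0) (nhds 0) := by
      have := hca.tendsto
      simpa [Real.zero_rpow hq.ne'] using this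
    apply (hcont.mono_left nhdsWithin_le_nhds).congr'
    filter_upwards [self_mem_nhdsWithin] with x hx
    have hx0 : x ≠ 0 := hx
    rw [slope_def_field]
    field_simp
    simp
  · have h1 : HasDerivAt (fun x : ℝ => x ^ (q + 1)) ((q + 1) * t ^ q) t := by
      have h2 : HasDerivAt (fun x : ℝ => x ^ (q + 1))
          ((q + 1) * t ^ (q + 1 - 1)) t :=
        Real.hasDerivAt_rpow_const (Or.inl h.ne')
      simpa using h2
    have heq : (fun x : ℝ => x * |x| ^ q) =ᶠ[nhds t] fun x => x ^ (q + 1) := by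
      filter_upwards [eventually_gt_nhds h] with x hx
      rw [abs_of_pos hx, Real.rpow_add_one hx.ne']
      ring
    have h4 := h1.congr_of_eventuallyEq heq
    rwa [abs_of_pos h]

private lemma strictMono_mul_abs_rpow {q : ℝ} (hq : 0 < q) :
    StrictMono (fun t : ℝ => t * |t| ^ q) := by
  have key : ∀ t : ℝ, 0 < t → 0 < t * |t| ^ q := by
    intro t ht
    have : (0:ℝ) < |t| ^ q := Real.rpow_pos_of_pos (abs_pos.mpr ht.ne') q
    positivity
  have hodd : ∀ t : ℝ, (-t) * |(-t)| ^ q = -(t * |t| ^ q) := by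
    intro t; rw [abs_neg]; ring
  have hmono : ∀ s t : ℝ, 0 ≤ s → s < t → s * |s| ^ q < t * |t| ^ q := by
    intro s t hs hst
    rw [abs_of_nonneg hs, abs_of_nonneg (hs.trans hst.le)]
    rcases eq_or_lt_of_le hs with rfl | hs'
    · simpa [Real.zero_rpow hq.ne', abs_of_pos hst] using key t hst
    · rw [mul_comm s, mul_comm t, ← Real.rpow_add_one hs'.ne',
        ← Real.rpow_add_one (hs'.trans hst).ne']
      exact Real.rpow_lt_rpow hs'.le hst (by linarith)
  intro s t hst
  rcases le_or_gt 0 s with hs | hs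
  · exact hmono s t hs hst
  · rcases le_or_gt t 0 with ht | ht
    · have := hmono (-t) (-s) (by linarith) (by linarith)
      rw [hodd, hodd] at this
      simpa using this
    · calc s * |s| ^ q < 0 := by
            have := key (-s) (by linarith); rw [hodd] at this; linarith
        _ < t * |t| ^ q := key t ht

theorem stmt_13 (σ₀ γ α β : ℝ) (hσ₀ : 0 < σ₀) (hγ : 1/2 ≤ γ) (hγ' : γ < 1)
    (hβ : β < 0)
    (f : ℝ → ℝ)
    (hf : f = fun x : ℝ =>
      Real.sign ((1 - γ) * σ₀ * x - α / β)
        * |(1 - γ) * σ₀ * x - α / β| ^ (1 / (1 - γ))) :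
    ContDiff ℝ 1 f
    ∧ StrictMono f
    ∧ Function.Bijective f
    ∧ (∀ x : ℝ, deriv f x = σ₀ * |f x| ^ γ)
    ∧ (∀ y : ℝ, y ≠ 0 →
        -((1 - γ) * |β|) * Function.invFun f y
          = (α * |y| ^ γ + β * y) / (σ₀ * |y| ^ γ)) := by
  have h1γ : (0:ℝ) < 1 - γ := by linarith
  set p : ℝ := 1 / (1 - γ) with hp
  have hp1 : 1 < p := by
    rw [hp, lt_div_iff₀ h1γ]; linarith
  set q : ℝ := p - 1 with hqdef
  have hq : 0 < q := by simp only [hqdef]; linarith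
  have hq1 : q + 1 = p := by rw [hqdef]; ring
  have hpγ : (1 - γ) * p = 1 := by
    rw [hp]; field_simp
  have hqγ : (1 - γ) * q = γ := by
    rw [hqdef, hp]; field_simp
    ring
  set c : ℝ := (1 - γ) * σ₀ with hc
  have hc0 : 0 < c := by positivity
  set a : ℝ := α / β with ha
  have hf' : f = fun x : ℝ => (c * x - a) * |c * x - a| ^ q := by
    rw [hf]; funext x
    exact sign_pow_eq p hp1 (c * x - a)
  have hcp : c * (q + 1) = σ₀ := by
    rw [hq1, hc]; linear_combination σ₀ * hpγ
  -- derivative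
  have hderiv : ∀ x : ℝ, HasDerivAt f (σ₀ * |f x| ^ γ) x := by
    intro x
    have hu : HasDerivAt (fun x : ℝ => c * x - a) c x := by
      simpa using ((hasDerivAt_id x).const_mul c).sub_const a
    have h1 := (hasDerivAt_mul_abs_rpow hq (c * x - a)).comp x hu
    have h1' : HasDerivAt f ((q + 1) * |c * x - a| ^ q * c) x := by
      rw [hf']; exact h1
    convert h1' using 1
    have hfx : |f x| = |c * x - a| ^ p := by
      simp only [hf']
      rw [abs_mul, abs_of_nonneg (Real.rpow_nonneg (abs_nonneg _) q)]
      rcases eq_or_ne (c * x - a) 0 with h | h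
      · simp [h, Real.zero_rpow hq.ne', Real.zero_rpow (by positivity : p ≠ 0)]
      · rw [mul_comm, ← Real.rpow_add_one (abs_ne_zero.mpr h), hq1]
    rw [hfx, ← Real.rpow_mul (abs_nonneg _)]
    have hpq : p * γ = q := by linear_combination q * hpγ - p * hqγ
    rw [hpq, ← hcp]; ring
  have hdiff : Differentiable ℝ f := fun x => (hderiv x).differentiableAt
  have hderiv_eq : deriv f = fun x => σ₀ * |f x| ^ γ := funext fun x => (hderiv x).deriv
  have hcontd : Continuous (deriv f) := by
    rw [hderiv_eq]
    have hcg : Continuous fun y : ℝ => |y| ^ γ := by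
      rw [continuous_iff_continuousAt]
      intro y
      exact (Real.continuousAt_rpow_const |y| γ (Or.inr (by linarith))).comp
        continuous_abs.continuousAt
    exact continuous_const.mul (hcg.comp hdiff.continuous)
  have hC1 : ContDiff ℝ 1 f := contDiff_one_iff_deriv.mpr ⟨hdiff, hcontd⟩
  have hmono : StrictMono f := by
    rw [hf']
    exact (strictMono_mul_abs_rpow hq).comp
      (fun s t hst => by simp only [sub_lt_sub_iff_right]; exact (mul_lt_mul_iff_right₀ hc0).mpr hst)
  -- explicit inverse
  have hpre : ∀ y : ℝ, f ((Real.sign y * |y| ^ (1 - γ) + a) / c) = y := by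
    intro y
    rcases eq_or_ne y 0 with rfl | hy
    · simp only [hf']
      have harg : c * ((Real.sign (0:ℝ) * |(0:ℝ)| ^ (1 - γ) + a) / c) - a = 0 := by
        field_simp
        simp
      rw [harg]; simp [Real.zero_rpow hq.ne']
    · simp only [hf']
      have harg : c * ((Real.sign y * |y| ^ (1 - γ) + a) / c) - a
          = Real.sign y * |y| ^ (1 - γ) := by field_simp; ring
      rw [harg]
      have habsy : (0:ℝ) < |y| := abs_pos.mpr hy
      have hsabs : |Real.sign y * |y| ^ (1 - γ)| = |y| ^ (1 - γ) := by
        rcases Real.sign_apply_eq_of_ne_zero y hy with h | h <;>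
          rw [h, abs_mul] <;>
          simp [abs_of_nonneg (Real.rpow_nonneg (abs_nonneg y) (1 - γ))]
      rw [hsabs, ← Real.rpow_mul habsy.le, hqγ, mul_assoc, ← Real.rpow_add habsy,
        show 1 - γ + γ = 1 by ring, Real.rpow_one, sign_mul_abs']
  have hbij : Function.Bijective f :=
    ⟨hmono.injective, fun y => ⟨_, hpre y⟩⟩
  refine ⟨hC1, hmono, hbij, fun x => by rw [hderiv_eq], ?_⟩
  intro y hy
  have hinv : Function.invFun f y = (Real.sign y * |y| ^ (1 - γ) + a) / c := by
    conv_lhs => rw [← hpre y]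
    exact Function.leftInverse_invFun hbij.injective _
  rw [hinv]
  have habsy : (0:ℝ) < |y| := abs_pos.mpr hy
  have habsβ : |β| = -β := abs_of_neg hβ
  have hrw : |y| ^ (1 - γ) * |y| ^ γ = |y| := by
    rw [← Real.rpow_add habsy]; norm_num
  have hsy : Real.sign y * |y| = y := sign_mul_abs' y
  have hyγ : (0:ℝ) < |y| ^ γ := Real.rpow_pos_of_pos habsy γ
  set S : ℝ := Real.sign y * |y| ^ (1 - γ) with hS
  have key : β * S * |y| ^ γ = β * y := by
    calc β * S * |y| ^ γ = β * (Real.sign y * (|y| ^ (1 - γ) * |y| ^ γ)) := by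
          rw [hS]; ring
      _ = β * (Real.sign y * |y|) := by rw [hrw]
      _ = β * y := by rw [hsy]
  have expand : -((1 - γ) * |β|) * ((S + a) / c) = (β * S + α) / σ₀ := by
    rw [habsβ, hc, ha]
    field_simp [hβ.ne]
  rw [expand, div_eq_div_iff hσ₀.ne' (by positivity)]
  linear_combination σ₀ * key
end
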